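/- Let R be a UFD, I a nonzero ideal of R with k = gcd(I) ≠ 0, and let B̂ = [[ê,f̂],[ĝ,ĥ]] ∈ M_2(R/I) be an I-matrix with pre-image B ∈ M_2(R). Then the centralizer of B̂ in M_2(R/I) equals Θ(Cen(B)) + S, where Θ is the induced map M_2(R) → M_2(R/I), Cen(B) is the centralizer of B in M_2(R), and S is the set of matrices [[x₁₁,x₁₂],[x₂₁,x₂₂]] with x₁₁ = 0, x₁₂ ∈ ann(ĝ) ∩ ann(ê−ĥ), x₂₁ ∈ ann(f̂) ∩ ann(ê−ĥ), and x₂₂ ∈ ann(f̂) ∩ ann(ĝ). -/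

import Mathlib

lemma matof_apply {R : Type*} (M : Matrix (Fin 2) (Fin 2) R) (i j : Fin 2) :
    Matrix.of M i j = M i j := rfl

lemma keylem {R : Type*} [CommRing R] [IsDomain R] {I : Ideal R} {k t m : R}
    (hk1 : ∀ a ∈ I, k ∣ a) (hkm : k = t * m) (ht0 : t ≠ 0) {w : R}
    (hw : t * w ∈ I) : ∃ r : R, w = m * r ∧ k * r ∈ I := by
  obtain ⟨n, hn⟩ := hk1 _ hw
  refine ⟨n, mul_left_cancel₀ ht0 (by linear_combination hn + n * hkm), by rwa [← hn]⟩

lemma liftdiv {R : Type*} [CommRing R] [IsDomain R] {I : Ideal R} {k t m : R}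
    (hk1 : ∀ a ∈ I, k ∣ a) (hkm : k = t * m) {x : R}
    (hx : Ideal.Quotient.mk I x ∈ Ideal.span {Ideal.Quotient.mk I t}) :
    ∃ X : R, x = t * X := by
  rw [Ideal.mem_span_singleton] at hx
  obtain ⟨v, hv⟩ := hx
  obtain ⟨v', rfl⟩ := Ideal.Quotient.mk_surjective v
  have h2 : x - t * v' ∈ I := by
    rw [← Ideal.Quotient.eq]
    rw [hv, ← map_mul]
  obtain ⟨n, hn⟩ := hk1 _ h2
  exact ⟨v' + m * n, by linear_combination hn + n * hkm⟩

lemma core {R : Type*} [CommRing R] [IsDomain R] {I : Ideal R} {k t m : R}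
    (hk1 : ∀ a ∈ I, k ∣ a) (hkm : k = t * m) (ht0 : t ≠ 0)
    (u b c : R) (y z s : R ⧸ I)
    (h1 : Ideal.Quotient.mk I c * y = Ideal.Quotient.mk I b * z)
    (h2 : Ideal.Quotient.mk I u * y = Ideal.Quotient.mk I b * s)
    (h3 : Ideal.Quotient.mk I u * z = Ideal.Quotient.mk I c * s)
    (hspan : Ideal.span {Ideal.Quotient.mk I b, Ideal.Quotient.mk I c}
      = Ideal.span {Ideal.Quotient.mk I t}) :
    ∃ Y Z S : R, Y * c = b * Z ∧ Y * u = b * S ∧ Z * u = c * S ∧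
      Ideal.Quotient.mk I c * (y - Ideal.Quotient.mk I Y) = 0 ∧
      Ideal.Quotient.mk I u * (y - Ideal.Quotient.mk I Y) = 0 ∧
      Ideal.Quotient.mk I b * (z - Ideal.Quotient.mk I Z) = 0 ∧
      Ideal.Quotient.mk I u * (z - Ideal.Quotient.mk I Z) = 0 ∧
      Ideal.Quotient.mk I b * (s - Ideal.Quotient.mk I S) = 0 ∧
      Ideal.Quotient.mk I c * (s - Ideal.Quotient.mk I S) = 0 := by
  set q := Ideal.Quotient.mk I with hqdef
  obtain ⟨B1, hb⟩ := liftdiv hk1 hkm (x := b) (hspan ▸ Ideal.subset_span (by simp [hqdef]))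
  obtain ⟨C1, hc⟩ := liftdiv hk1 hkm (x := c) (hspan ▸ Ideal.subset_span (by simp [hqdef]))
  have htmem : q t ∈ Ideal.span {q b, q c} := hspan ▸ Ideal.mem_span_singleton_self _
  rw [Ideal.mem_span_pair] at htmem
  obtain ⟨lam, mu, hlm⟩ := htmem
  obtain ⟨l, rfl⟩ := Ideal.Quotient.mk_surjective lam
  obtain ⟨mu', rfl⟩ := Ideal.Quotient.mk_surjective mu
  rw [← hqdef] at hlm
  have h4 : t - (l * b + mu' * c) ∈ I := by
    rw [← Ideal.Quotient.eq_zero_iff_mem, ← hqdef]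
    simp only [map_sub, map_add, map_mul]
    linear_combination -hlm
  obtain ⟨j, hj⟩ := hk1 _ h4
  have hone : (1 : R) = l * B1 + mu' * C1 + m * j :=
    mul_left_cancel₀ ht0 (by linear_combination hj + j * hkm + l * hb + mu' * hc)
  have hkj : k * j ∈ I := hj ▸ h4
  obtain ⟨y', hy'⟩ := Ideal.Quotient.mk_surjective y
  obtain ⟨z', hz'⟩ := Ideal.Quotient.mk_surjective z
  obtain ⟨s', hs'⟩ := Ideal.Quotient.mk_surjective s
  rw [← hqdef] at hy' hz' hs'
  have hqb : q b = q t * q B1 := by rw [hb, map_mul]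
  have hqc : q c = q t * q C1 := by rw [hc, map_mul]
  have hqk : q k = q t * q m := by rw [hkm, map_mul]
  have hone' : (1 : R ⧸ I) = q l * q B1 + q mu' * q C1 + q m * q j := by
    calc (1 : R ⧸ I) = q 1 := (map_one q).symm
    _ = q (l * B1 + mu' * C1 + m * j) := by rw [← hone]
    _ = q l * q B1 + q mu' * q C1 + q m * q j := by simp only [map_add, map_mul]
  have hkj' : q k * q j = 0 := by
    rw [← map_mul]; exact Ideal.Quotient.eq_zero_iff_mem.mpr hkj
  have hw : t * (C1 * y' - B1 * z') ∈ I := by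
    rw [← Ideal.Quotient.eq_zero_iff_mem, ← hqdef]
    simp only [map_mul, map_sub]
    rw [hy', hz']
    linear_combination h1 + z * hqb - y * hqc
  obtain ⟨r, hr, hkr⟩ := keylem hk1 hkm ht0 hw
  have hr' : q C1 * y - q B1 * z = q m * q r := by
    have h := congrArg q hr
    simp only [map_sub, map_mul] at h
    rw [hy', hz'] at h
    exact h
  have hkr' : q k * q r = 0 := by
    rw [← map_mul]; exact Ideal.Quotient.eq_zero_iff_mem.mpr hkr
  set e : R := l * y' + mu' * z' with hedef
  have hqe : q e = q l * y + q mu' * z := by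
    rw [hedef]; simp only [map_add, map_mul]; rw [hy', hz']
  have hue : q u * q e = q t * s := by
    rw [hqe]
    linear_combination (q l) * h2 + (q mu') * h3 + (q l * s) * hqb
      + (q mu' * s) * hqc - (s * q t) * hone' + (s * q j) * hqk - s * hkj'
  have hueI : u * e - t * s' ∈ I := by
    rw [← Ideal.Quotient.eq_zero_iff_mem, ← hqdef]
    simp only [map_sub, map_mul]
    rw [hs']
    linear_combination hue
  obtain ⟨i2, hi2⟩ := hk1 _ hueI
  have hS : u * e = t * (s' + m * i2) := by linear_combination hi2 + i2 * hkm
  have hki2 : q k * q i2 = 0 := by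
    rw [← map_mul]
    exact Ideal.Quotient.eq_zero_iff_mem.mpr (by rwa [← hi2])
  have hqS : q (s' + m * i2) = s + q m * q i2 := by
    simp only [map_add, map_mul]; rw [hs']
  have hqY : q (e * B1) = (q l * y + q mu' * z) * q B1 := by rw [map_mul, hqe]
  have hqZ : q (e * C1) = (q l * y + q mu' * z) * q C1 := by rw [map_mul, hqe]
  have hYy : y - q (e * B1) = q m * (q mu' * q r + q j * y) := by
    rw [hqY]; linear_combination y * hone' + q mu' * hr'
  have hZz : z - q (e * C1) = q m * (q j * z - q l * q r) := by
    rw [hqZ]; linear_combination z * hone' - q l * hr'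
  have hcm : q c * q m = q C1 * q k := by linear_combination q m * hqc - q C1 * hqk
  have hbm : q b * q m = q B1 * q k := by linear_combination q m * hqb - q B1 * hqk
  have hur : q u * (q m * q r) = 0 := by
    linear_combination -q u * hr' + q C1 * h2 - q B1 * h3 + (q C1 * s) * hqb - (q B1 * s) * hqc
  have hujy : q u * (q m * (q j * y)) = 0 := by
    linear_combination (q m * q j) * h2 + (q m * q j * s) * hqb - (q B1 * s * q j) * hqk + (q B1 * s) * hkj'
  have hujz : q u * (q m * (q j * z)) = 0 := by
    linear_combination (q m * q j) * h3 + (q m * q j * s) * hqc - (q C1 * s * q j) * hqk + (q C1 * s) * hkj'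
  refine ⟨e * B1, e * C1, s' + m * i2,
    by linear_combination (e * B1) * hc - (e * C1) * hb,
    by linear_combination B1 * hS - (s' + m * i2) * hb,
    by linear_combination C1 * hS - (s' + m * i2) * hc,
    ?_, ?_, ?_, ?_, ?_, ?_⟩
  · linear_combination q c * hYy + (q mu' * q r + q j * y) * hcm + (q C1 * q mu') * hkr' + (q C1 * y) * hkj'
  · linear_combination q u * hYy + q mu' * hur + hujy
  · linear_combination q b * hZz + (q j * z - q l * q r) * hbm + (q B1 * z) * hkj' - (q B1 * q l) * hkr'
  · linear_combination q u * hZz + hujz - q l * hur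
  · linear_combination -q b * hqS - q i2 * hbm - q B1 * hki2
  · linear_combination -q c * hqS - q i2 * hcm - q C1 * hki2

lemma core3 {R : Type*} [CommRing R] [IsDomain R] {I : Ideal R} {k t m : R}
    (hk1 : ∀ a ∈ I, k ∣ a) (hkm : k = t * m) (ht0 : t ≠ 0)
    (u b c : R) (y z s : R ⧸ I)
    (h1 : Ideal.Quotient.mk I c * y = Ideal.Quotient.mk I b * z)
    (h2 : Ideal.Quotient.mk I u * y = Ideal.Quotient.mk I b * s)
    (h3 : Ideal.Quotient.mk I u * z = Ideal.Quotient.mk I c * s)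
    (hspan : Ideal.span {Ideal.Quotient.mk I u, Ideal.Quotient.mk I b}
        = Ideal.span {Ideal.Quotient.mk I t} ∨
      Ideal.span {Ideal.Quotient.mk I u, Ideal.Quotient.mk I c}
        = Ideal.span {Ideal.Quotient.mk I t} ∨
      Ideal.span {Ideal.Quotient.mk I b, Ideal.Quotient.mk I c}
        = Ideal.span {Ideal.Quotient.mk I t}) :
    ∃ Y Z S : R, Y * c = b * Z ∧ Y * u = b * S ∧ Z * u = c * S ∧
      Ideal.Quotient.mk I c * (y - Ideal.Quotient.mk I Y) = 0 ∧
      Ideal.Quotient.mk I u * (y - Ideal.Quotient.mk I Y) = 0 ∧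
      Ideal.Quotient.mk I b * (z - Ideal.Quotient.mk I Z) = 0 ∧
      Ideal.Quotient.mk I u * (z - Ideal.Quotient.mk I Z) = 0 ∧
      Ideal.Quotient.mk I b * (s - Ideal.Quotient.mk I S) = 0 ∧
      Ideal.Quotient.mk I c * (s - Ideal.Quotient.mk I S) = 0 := by
  rcases hspan with hs | hs | hs
  · obtain ⟨Y, Z, S, i1, i2, i3, k1, k2, k3, k4, k5, k6⟩ :=
      core hk1 hkm ht0 c b u y s z h2 h1 h3.symm (by rwa [Ideal.span_pair_comm] at hs)
    exact ⟨Y, S, Z, by linear_combination i2, by linear_combination i1,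
      by linear_combination -i3, k2, k1, k5, k6, k3, k4⟩
  · obtain ⟨Y, Z, S, i1, i2, i3, k1, k2, k3, k4, k5, k6⟩ :=
      core hk1 hkm ht0 b c u z s y h3 h1.symm h2.symm (by rwa [Ideal.span_pair_comm] at hs)
    exact ⟨S, Y, Z, by linear_combination -i2, by linear_combination -i3,
      by linear_combination i1, k5, k6, k2, k1, k4, k3⟩
  · exact core hk1 hkm ht0 u b c y z s h1 h2 h3 hs

theorem stmt18 {R : Type*} [CommRing R] [IsDomain R] [UniqueFactorizationMonoid R]
    (I : Ideal R) (hI : I ≠ ⊥) (k : R) (hk0 : k ≠ 0)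
    (hk : (∀ a ∈ I, k ∣ a) ∧ ∀ d : R, (∀ a ∈ I, d ∣ a) → d ∣ k)
    (B : Matrix (Fin 2) (Fin 2) R)
    (hIm : ∃ t : R, t ∣ k ∧
      (Ideal.span {Ideal.Quotient.mk I (B 0 0) - Ideal.Quotient.mk I (B 1 1),
          Ideal.Quotient.mk I (B 0 1)} = Ideal.span {Ideal.Quotient.mk I t} ∨
       Ideal.span {Ideal.Quotient.mk I (B 0 0) - Ideal.Quotient.mk I (B 1 1),
          Ideal.Quotient.mk I (B 1 0)} = Ideal.span {Ideal.Quotient.mk I t} ∨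
       Ideal.span {Ideal.Quotient.mk I (B 0 1), Ideal.Quotient.mk I (B 1 0)} =
          Ideal.span {Ideal.Quotient.mk I t})) :
    {Ahat : Matrix (Fin 2) (Fin 2) (R ⧸ I) |
        Ahat * B.map (Ideal.Quotient.mk I) = B.map (Ideal.Quotient.mk I) * Ahat} =
      {Ahat : Matrix (Fin 2) (Fin 2) (R ⧸ I) |
        ∃ C : Matrix (Fin 2) (Fin 2) R, C * B = B * C ∧
        ∃ D : Matrix (Fin 2) (Fin 2) (R ⧸ I),
          D 0 0 = 0 ∧
          Ideal.Quotient.mk I (B 1 0) * D 0 1 = 0 ∧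
          (Ideal.Quotient.mk I (B 0 0) - Ideal.Quotient.mk I (B 1 1)) * D 0 1 = 0 ∧
          Ideal.Quotient.mk I (B 0 1) * D 1 0 = 0 ∧
          (Ideal.Quotient.mk I (B 0 0) - Ideal.Quotient.mk I (B 1 1)) * D 1 0 = 0 ∧
          Ideal.Quotient.mk I (B 0 1) * D 1 1 = 0 ∧
          Ideal.Quotient.mk I (B 1 0) * D 1 1 = 0 ∧
          Ahat = C.map (Ideal.Quotient.mk I) + D} := by
  obtain ⟨t, ht, hcases⟩ := hIm
  have ht0 : t ≠ 0 := by
    rintro rfl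
    exact hk0 (zero_dvd_iff.mp ht)
  obtain ⟨m, hkm⟩ := ht
  set q := Ideal.Quotient.mk I with hqdef
  have hu : q (B 0 0 - B 1 1) = q (B 0 0) - q (B 1 1) := map_sub q _ _
  ext Ahat
  simp only [Set.mem_setOf_eq]
  constructor
  · intro hcomm
    have h00 := congrFun (congrFun hcomm 0) 0
    have h01 := congrFun (congrFun hcomm 0) 1
    have h10 := congrFun (congrFun hcomm 1) 0
    simp only [Matrix.mul_apply, Fin.sum_univ_two, Matrix.map_apply, ← hqdef] at h00 h01 h10
    have h1 : q (B 1 0) * Ahat 0 1 = q (B 0 1) * Ahat 1 0 := by linear_combination h00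
    have h2 : q (B 0 0 - B 1 1) * Ahat 0 1 = q (B 0 1) * (Ahat 0 0 - Ahat 1 1) := by
      rw [hu]; linear_combination -h01
    have h3 : q (B 0 0 - B 1 1) * Ahat 1 0 = q (B 1 0) * (Ahat 0 0 - Ahat 1 1) := by
      rw [hu]; linear_combination h10
    obtain ⟨Y, Z, S, i1, i2, i3, k1, k2, k3, k4, k5, k6⟩ :=
      core3 hk.1 hkm ht0 (B 0 0 - B 1 1) (B 0 1) (B 1 0)
        (Ahat 0 1) (Ahat 1 0) (Ahat 0 0 - Ahat 1 1) h1 h2 h3 (by rw [hu]; exact hcases)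
    obtain ⟨x0, hx0⟩ := Ideal.Quotient.mk_surjective (Ahat 0 0)
    rw [← hqdef] at hx0
    refine ⟨Matrix.of !![x0, Y; Z, x0 - S], ?_, Ahat - (Matrix.of !![x0, Y; Z, x0 - S]).map q,
      ?_, ?_, ?_, ?_, ?_, ?_, ?_, by abel⟩
    · ext i j
      fin_cases i <;> fin_cases j <;>
        simp only [Fin.mk_zero, Fin.mk_one, Fin.isValue, Matrix.mul_apply, Fin.sum_univ_two, matof_apply, Matrix.of_apply,
          Matrix.cons_val', Matrix.cons_val_zero, Matrix.cons_val_one, Matrix.head_cons,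
          Matrix.head_fin_const, Matrix.empty_val', Matrix.cons_val_fin_one]
      · linear_combination i1
      · linear_combination -i2
      · linear_combination i3
      · linear_combination -i1
    all_goals
      simp only [Matrix.sub_apply, Matrix.map_apply, matof_apply, Matrix.of_apply,
        Matrix.cons_val', Matrix.cons_val_zero, Matrix.cons_val_one, Matrix.head_cons,
        Matrix.head_fin_const, Matrix.empty_val', Matrix.cons_val_fin_one, map_sub, ← hqdef]
    · rw [hx0]; ring
    · linear_combination k1
    · rw [← hu]; linear_combination k2
    · linear_combination k3
    · rw [← hu]; linear_combination k4
    · linear_combination -k5 - q (B 0 1) * hx0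
    · linear_combination -k6 - q (B 1 0) * hx0
  · rintro ⟨C, hC, D, hD00, hDc01, hDu01, hDb10, hDu10, hDb11, hDc11, rfl⟩
    have hCB : C.map q * B.map q = B.map q * C.map q := by
      rw [← Matrix.map_mul, ← Matrix.map_mul, hC]
    have hDB : D * B.map q = B.map q * D := by
      ext i j
      fin_cases i <;> fin_cases j <;>
        simp only [Fin.mk_zero, Fin.mk_one, Fin.isValue, Matrix.mul_apply, Fin.sum_univ_two, Matrix.map_apply, ← hqdef]
      · linear_combination hDc01 - hDb10
      · linear_combination q (B 0 1) * hD00 - hDu01 - hDb11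
      · linear_combination hDu10 + hDc11 - q (B 1 0) * hD00
      · linear_combination hDb10 - hDc01
    rw [add_mul, mul_add, hCB, hDB]
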